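/- For consecutive ADI block iterates with a complex conjugate pair of shifts μ_i and μ_{i+1} = μ̄_i (Im(μ_i) ≠ 0), where V_i = (Aᵀ + μ_iEᵀ)⁻¹W_{i−1} and V_{i+1} = (Aᵀ + μ̄_iEᵀ)⁻¹W_i with W_i = W_{i−1} − 2Re(μ_i)EᵀV_i and W_{i−1} real, it holds that V_{i+1} = V̄_i + 2δ_i Im(V_i), where δ_i = Re(μ_i)/Im(μ_i) and V̄_i denotes entrywise complex conjugation. -/
import Mathlib


open Matrix

theorem adi_conjugate_pair_iterate (n q : ℕ)
    (E A : Matrix (Fin n) (Fin n) ℝ) (W : Matrix (Fin n) (Fin q) ℝ)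
    (μ : ℂ) (hre : μ.re < 0) (him : μ.im ≠ 0)
    (h1 : IsUnit ((A.map (Complex.ofReal))ᵀ + μ • (E.map (Complex.ofReal))ᵀ))
    (h2 : IsUnit ((A.map (Complex.ofReal))ᵀ + (starRingEnd ℂ μ) • (E.map (Complex.ofReal))ᵀ)) :
    let Ac := A.map (Complex.ofReal)
    let Ec := E.map (Complex.ofReal)
    let V := (Acᵀ + μ • Ecᵀ)⁻¹ * (W.map (Complex.ofReal))
    let W' := W.map (Complex.ofReal) - ((2 : ℂ) * (μ.re : ℂ)) • (Ecᵀ * V)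
    (Acᵀ + (starRingEnd ℂ μ) • Ecᵀ)⁻¹ * W'
      = V.map (starRingEnd ℂ) + ((2 : ℂ) * ((μ.re / μ.im : ℝ) : ℂ)) •
          (V.map (fun z => ((z.im : ℝ) : ℂ))) := by
  intro Ac Ec V W'
  set Wc := W.map (Complex.ofReal) with hWc
  set M := Acᵀ + μ • Ecᵀ with hM
  set N := Acᵀ + (starRingEnd ℂ μ) • Ecᵀ with hN
  have hMdet : IsUnit M.det := (Matrix.isUnit_iff_isUnit_det M).mp h1
  have hNdet : IsUnit N.det := (Matrix.isUnit_iff_isUnit_det N).mp h2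
  have hMV : M * V = Wc := by
    show M * (M⁻¹ * Wc) = Wc
    rw [← Matrix.mul_assoc, Matrix.mul_nonsing_inv _ hMdet, Matrix.one_mul]
  have hNM : N = M.map (starRingEnd ℂ) := by
    ext i j
    simp [hM, hN, Matrix.add_apply, Matrix.map_apply, Matrix.transpose_apply,
      Complex.conj_ofReal, Ac, Ec]
  have hWcC : Wc.map (starRingEnd ℂ) = Wc := by
    ext i j; simp [Matrix.map_apply, Complex.conj_ofReal, Wc]
  have hNVc : N * V.map (starRingEnd ℂ) = Wc := by
    rw [hNM, ← Matrix.map_mul, hMV, hWcC]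
  have hNsub : N = M - (((2 * μ.im : ℝ) : ℂ) * Complex.I) • Ecᵀ := by
    rw [hM, hN]
    have hμ : (starRingEnd ℂ) μ = μ - ((2 * μ.im : ℝ) : ℂ) * Complex.I := by
      have := Complex.sub_conj μ
      push_cast at this ⊢
      linear_combination -this
    rw [hμ, sub_smul]
    abel
  have hNV : N * V = Wc - (((2 * μ.im : ℝ) : ℂ) * Complex.I) • (Ecᵀ * V) := by
    rw [hNsub, Matrix.sub_mul, hMV, Matrix.smul_mul]
  have hImV : ((2 : ℂ) * Complex.I) • (V.map fun z => ((z.im : ℝ) : ℂ))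
      = V - V.map (starRingEnd ℂ) := by
    ext i j
    simp only [Matrix.smul_apply, Matrix.map_apply, Matrix.sub_apply, smul_eq_mul]
    have := Complex.sub_conj (V i j)
    push_cast at this ⊢
    linear_combination -this
  have h2I : ((2 : ℂ) * Complex.I) ≠ 0 := by
    simp [Complex.I_ne_zero]
  have hNIm : N * (V.map fun z => ((z.im : ℝ) : ℂ)) = (-(μ.im : ℂ)) • (Ecᵀ * V) := by
    apply smul_right_injective (Matrix (Fin n) (Fin q) ℂ) h2I
    show ((2 : ℂ) * Complex.I) • (N * V.map fun z => ((z.im : ℝ) : ℂ))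
      = ((2 : ℂ) * Complex.I) • ((-(μ.im : ℂ)) • (Ecᵀ * V))
    rw [← Matrix.mul_smul, hImV, Matrix.mul_sub, hNV, hNVc, smul_smul]
    have : (2 : ℂ) * Complex.I * -(μ.im : ℂ) = -(((2 * μ.im : ℝ) : ℂ) * Complex.I) := by
      push_cast; ring
    rw [this, neg_smul]
    abel
  have key : N * (V.map (starRingEnd ℂ) + ((2 : ℂ) * ((μ.re / μ.im : ℝ) : ℂ)) •
      (V.map fun z => ((z.im : ℝ) : ℂ))) = W' := by
    rw [Matrix.mul_add, hNVc, Matrix.mul_smul, hNIm, smul_smul]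
    have : (2 : ℂ) * ((μ.re / μ.im : ℝ) : ℂ) * -(μ.im : ℂ) = -((2 : ℂ) * (μ.re : ℂ)) := by
      have h' : (μ.im : ℂ) ≠ 0 := Complex.ofReal_ne_zero.mpr him
      push_cast
      field_simp
    rw [this, neg_smul, ← sub_eq_add_neg]
  calc N⁻¹ * W' = N⁻¹ * (N * (V.map (starRingEnd ℂ) +
        ((2 : ℂ) * ((μ.re / μ.im : ℝ) : ℂ)) • (V.map fun z => ((z.im : ℝ) : ℂ)))) := by
        rw [key]
    _ = _ := by rw [← Matrix.mul_assoc, Matrix.nonsing_inv_mul _ hNdet, Matrix.one_mul]
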